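/- Let k have characteristic 2, G = ⟨σ⟩ cyclic of order 4 acting on V = V_3 as above, Δ = σ−1, and A = k[N^G(x_1), N^G_H(x_2), x_3]. Then the set {1, x_1, x_2, x_1^2, Δ(x_1^3), Δ(x_1^3 x_2)} freely generates ker(Δ^3) over A, and the set {1, x_1, x_2, x_1^2, x_1x_2, x_1^3, x_1^2x_2, x_1^3x_2} freely generates ker(Δ^4) = k[V] over A. -/

import Mathlib

open MvPolynomial

/-- The action of the generator `σ` of `G = C₄` on `k[V₃] = k[x₁,x₂,x₃]`
(char 2): `σx₁ = x₁+x₂`, `σx₂ = x₂+x₃`, `σx₃ = x₃` (variables `X 0, X 1, X 2`). -/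
noncomputable def sigmaC4 (K : Type*) [CommSemiring K] :
    MvPolynomial (Fin 3) K →ₐ[K] MvPolynomial (Fin 3) K :=
  aeval ![X 0 + X 1, X 1 + X 2, X 2]

/-- `Δ = σ − 1` on `k[V₃]`. -/
noncomputable def deltaC4 (K : Type*) [CommRing K] (f : MvPolynomial (Fin 3) K) :
    MvPolynomial (Fin 3) K :=
  sigmaC4 K f - f

/-- For `char k = 2`, `G = C₄` acting on `V₃`, and
`A = k[N^G(x₁), N^G_H(x₂), x₃]`: the set `{1, x₁, x₂, x₁², Δ(x₁³), Δ(x₁³x₂)}`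
freely generates `ker(Δ³)` over `A`, and `{1, x₁, x₂, x₁², x₁x₂, x₁³, x₁²x₂, x₁³x₂}`
freely generates `ker(Δ⁴) = k[V]` over `A`. -/
lemma baseP_aux {R : Type*} [CommRing R] {p : Polynomial R} (hp : p.Monic) :
    ∀ (N : ℕ) (r : ℕ → Polynomial R), (∀ m, (r m).degree < p.degree) →
      ∑ m ∈ Finset.range N, r m * p ^ m = 0 → ∀ m < N, r m = 0 := by
  intro N
  induction N with
  | zero => intro r _ _ m hm; omega
  | succ N ih =>
    intro r hr h m hm
    rw [Finset.sum_range_succ'] at h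
    have hq : (∑ k ∈ Finset.range N, r (k + 1) * p ^ k) * p + r 0 = 0 := by
      rw [← h, Finset.sum_mul]
      congr 1
      · exact Finset.sum_congr rfl fun k _ => by rw [pow_succ]; ring
      · simp
    set q := ∑ k ∈ Finset.range N, r (k + 1) * p ^ k with hqdef
    have hq0 : q = 0 := by
      by_contra hne
      have hr0 : r 0 = -(q * p) := eq_neg_of_add_eq_zero_right hq
      have h1 : (r 0).degree = q.degree + p.degree := by
        rw [hr0, Polynomial.degree_neg, hp.degree_mul]
      have h2 : p.degree ≤ q.degree + p.degree :=
        le_add_of_nonneg_left (Polynomial.zero_le_degree_iff.mpr hne)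
      exact absurd (hr 0) (by rw [h1]; exact not_lt.mpr h2)
    have hr00 : r 0 = 0 := by
      have := hq; rw [hq0, zero_mul, zero_add] at this; exact this
    match m, hm with
    | 0, _ => exact hr00
    | (m + 1), hm =>
      exact ih (fun k => r (k + 1)) (fun k => hr (k + 1))
        (by rw [hqdef] at hq0; exact hq0) m (by omega)

noncomputable def phi2 (K : Type*) [CommSemiring K] :
    MvPolynomial (Fin 2) K →ₐ[K] MvPolynomial (Fin 2) K :=
  aeval ![X 0 ^ 2 + X 0 * X 1, X 1]

lemma keyInj2 {K : Type*} [Field K] (γ₀ γ₁ : MvPolynomial (Fin 2) K)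
    (h : phi2 K γ₀ + phi2 K γ₁ * X 0 = 0) : γ₀ = 0 ∧ γ₁ = 0 := by
  set T := MvPolynomial (Fin 1) K with hT
  set e₁ := MvPolynomial.finSuccEquiv K 1 with he₁
  have he0 : e₁ ((X 0 : MvPolynomial (Fin 2) K)) = Polynomial.X := finSuccEquiv_X_zero
  have he1 : e₁ ((X 1 : MvPolynomial (Fin 2) K)) = Polynomial.C (X 0) := by
    rw [show (1 : Fin 2) = Fin.succ 0 from rfl]; exact finSuccEquiv_X_succ
  have heC : ∀ a : K, e₁ (C a) = Polynomial.C (C a) := by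
    intro a; simp [he₁, finSuccEquiv_apply]
  set Q : Polynomial T := Polynomial.X ^ 2 + Polynomial.C (X 0) * Polynomial.X with hQdef
  have hQ : e₁ ((X 0 : MvPolynomial (Fin 2) K) ^ 2 + X 0 * X 1) = Q := by
    rw [map_add, map_mul, map_pow, he0, he1, hQdef]; ring
  have hQm : Q.Monic := by
    apply Polynomial.monic_X_pow_add
    exact lt_of_le_of_lt (Polynomial.degree_C_mul_X_le _) (by norm_num)
  have hQd : Q.degree = 2 := by
    rw [hQdef, Polynomial.degree_add_eq_left_of_degree_lt, Polynomial.degree_X_pow]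
    · rfl
    · rw [Polynomial.degree_X_pow]
      exact lt_of_le_of_lt (Polynomial.degree_C_mul_X_le _) (by norm_num)
  have hrep : ∀ γ : MvPolynomial (Fin 2) K,
      e₁ (phi2 K γ) = Polynomial.eval₂ Polynomial.C Q (e₁ γ) := by
    intro γ
    have key : (e₁ : MvPolynomial (Fin 2) K →+* Polynomial T).comp
          ((phi2 K : MvPolynomial (Fin 2) K →ₐ[K] MvPolynomial (Fin 2) K) :
            MvPolynomial (Fin 2) K →+* MvPolynomial (Fin 2) K)
        = (Polynomial.eval₂RingHom Polynomial.C Q).comp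
            (e₁ : MvPolynomial (Fin 2) K →+* Polynomial T) := by
      apply MvPolynomial.ringHom_ext
      · intro a
        simp only [RingHom.coe_comp, Function.comp_apply, RingHom.coe_coe,
          Polynomial.coe_eval₂RingHom]
        rw [show (phi2 K) (C a) = C a by simp [phi2, algebraMap_eq], heC,
          Polynomial.eval₂_C]
      · intro i
        refine Fin.cases ?_ (fun j => ?_) i
        · simp only [RingHom.coe_comp, Function.comp_apply, RingHom.coe_coe, phi2, aeval_X,
            Matrix.cons_val_zero, Polynomial.coe_eval₂RingHom]
          rw [hQ, he0]
          simp
        · have hj : j = 0 := Subsingleton.elim _ _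
          subst hj
          simp only [RingHom.coe_comp, Function.comp_apply, RingHom.coe_coe, phi2, aeval_X,
            Polynomial.coe_eval₂RingHom]
          rw [show (Fin.succ 0 : Fin 2) = 1 from rfl]
          simp only [Matrix.cons_val_one, Matrix.head_cons]
          rw [show ((1:Fin 2)) = Fin.succ 0 from rfl]
          rw [he₁, finSuccEquiv_X_succ]
          simp [he1]
          exact he1
    exact RingHom.congr_fun key γ
  -- apply e₁ to h
  set A := e₁ γ₀ with hA
  set B := e₁ γ₁ with hB
  set M := max A.natDegree B.natDegree + 1 with hM
  have hAM : A.natDegree < M := by omega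
  have hBM : B.natDegree < M := by omega
  have h0 : Polynomial.eval₂ Polynomial.C Q A + Polynomial.eval₂ Polynomial.C Q B * Polynomial.X
      = 0 := by
    have := congrArg e₁ h
    rw [map_add, map_mul, map_zero, he0, hrep, hrep] at this
    exact this
  have hrel : ∑ m ∈ Finset.range M,
      (Polynomial.C (A.coeff m) + Polynomial.C (B.coeff m) * Polynomial.X) * Q ^ m = 0 := by
    have expand : ∑ m ∈ Finset.range M,
        (Polynomial.C (A.coeff m) + Polynomial.C (B.coeff m) * Polynomial.X) * Q ^ m
        = (∑ m ∈ Finset.range M, Polynomial.C (A.coeff m) * Q ^ m)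
          + (∑ m ∈ Finset.range M, Polynomial.C (B.coeff m) * Q ^ m) * Polynomial.X := by
      rw [Finset.sum_mul, ← Finset.sum_add_distrib]
      exact Finset.sum_congr rfl fun m _ => by ring
    rw [expand, ← Polynomial.eval₂_eq_sum_range' Polynomial.C hAM,
      ← Polynomial.eval₂_eq_sum_range' Polynomial.C hBM]
    exact h0
  have hz : ∀ m < M, Polynomial.C (A.coeff m) + Polynomial.C (B.coeff m) * Polynomial.X = 0 := by
    apply baseP_aux hQm M _ _ hrel
    intro m
    rw [hQd]
    refine lt_of_le_of_lt (Polynomial.degree_add_le _ _) ?_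
    refine max_lt (lt_of_le_of_lt Polynomial.degree_C_le (by norm_num)) ?_
    exact lt_of_le_of_lt (Polynomial.degree_C_mul_X_le _) (by norm_num)
  have hcoeffs : ∀ m, A.coeff m = 0 ∧ B.coeff m = 0 := by
    intro m
    by_cases hm : m < M
    · have := hz m hm
      constructor
      · have := congrArg (fun p => Polynomial.coeff p 0) this
        simpa using this
      · have := congrArg (fun p => Polynomial.coeff p 1) this
        simpa using this
    · push_neg at hm
      constructor
      · exact Polynomial.coeff_eq_zero_of_natDegree_lt (by omega)
      · exact Polynomial.coeff_eq_zero_of_natDegree_lt (by omega)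
  have hA0 : A = 0 := Polynomial.ext fun m => by simpa using (hcoeffs m).1
  have hB0 : B = 0 := Polynomial.ext fun m => by simpa using (hcoeffs m).2
  constructor
  · exact e₁.injective (by rw [← hA, hA0, map_zero])
  · exact e₁.injective (by rw [← hB, hB0, map_zero])
noncomputable def n1p (K : Type*) [CommSemiring K] : MvPolynomial (Fin 3) K :=
  X 0 ^ 4 + (X 1 ^ 2 + X 1 * X 2 + X 2 ^ 2) * X 0 ^ 2 + (X 1 ^ 2 * X 2 + X 1 * X 2 ^ 2) * X 0

noncomputable def n2p (K : Type*) [CommSemiring K] : MvPolynomial (Fin 3) K :=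
  X 1 ^ 2 + X 1 * X 2

noncomputable def psi3 (K : Type*) [CommSemiring K] :
    MvPolynomial (Fin 3) K →ₐ[K] MvPolynomial (Fin 3) K :=
  aeval ![n1p K, n2p K, X 2]

lemma regroup8 {S : Type*} [CommRing S] (M : ℕ) (P : Polynomial S)
    (s : Fin 8 → ℕ → Polynomial S) (μ : Fin 8 → Polynomial S) :
    ∑ c : Fin 8, (∑ m ∈ Finset.range M, s c m * P ^ m) * μ c
      = ∑ m ∈ Finset.range M, (∑ c : Fin 8, s c m * μ c) * P ^ m := by
  simp_rw [Finset.sum_mul]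
  rw [Finset.sum_comm]
  exact Finset.sum_congr rfl fun m _ => Finset.sum_congr rfl fun c _ => by ring

lemma keyInj {K : Type*} [Field K] (b : Fin 8 → MvPolynomial (Fin 3) K)
    (h : ∑ c : Fin 8, psi3 K (b c)
        * ![1, X 0, X 1, X 0 ^ 2, X 0 * X 1, X 0 ^ 3, X 0 ^ 2 * X 1, X 0 ^ 3 * X 1] c = 0) :
    ∀ c, b c = 0 := by
  set S := MvPolynomial (Fin 2) K with hS
  set e := MvPolynomial.finSuccEquiv K 2 with he
  have hx0 : e ((X 0 : MvPolynomial (Fin 3) K)) = Polynomial.X := finSuccEquiv_X_zero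
  have hx1 : e ((X 1 : MvPolynomial (Fin 3) K)) = Polynomial.C (X 0) := by
    rw [show (1 : Fin 3) = Fin.succ 0 from rfl]; exact finSuccEquiv_X_succ
  have hx2 : e ((X 2 : MvPolynomial (Fin 3) K)) = Polynomial.C (X 1) := by
    rw [show (2 : Fin 3) = Fin.succ 1 from rfl]; exact finSuccEquiv_X_succ
  have heC : ∀ a : K, e (C a) = Polynomial.C (C a) := by
    intro a; simp [he, finSuccEquiv_apply]
  set P : Polynomial S := Polynomial.X ^ 4
      + Polynomial.C (X 0 ^ 2 + X 0 * X 1 + X 1 ^ 2) * Polynomial.X ^ 2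
      + Polynomial.C (X 0 ^ 2 * X 1 + X 0 * X 1 ^ 2) * Polynomial.X with hPdef
  have hP : e (n1p K) = P := by
    rw [n1p, hPdef]
    simp only [map_add, map_mul, map_pow, hx0, hx1, hx2]
  have hn2 : e (n2p K) = Polynomial.C (X 0 ^ 2 + X 0 * X 1) := by
    rw [n2p]
    simp only [map_add, map_mul, map_pow, hx0, hx1, hx2]
  have hlow : (Polynomial.C (X 0 ^ 2 + X 0 * X 1 + X 1 ^ 2) * Polynomial.X ^ 2
      + Polynomial.C (X 0 ^ 2 * X 1 + X 0 * X 1 ^ 2) * Polynomial.X : Polynomial S).degree < 4 := by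
    refine lt_of_le_of_lt (Polynomial.degree_add_le _ _) (max_lt ?_ ?_)
    · exact lt_of_le_of_lt (Polynomial.degree_C_mul_X_pow_le _ _) (by norm_num)
    · exact lt_of_le_of_lt (Polynomial.degree_C_mul_X_le _) (by norm_num)
  have hPm : P.Monic := by
    rw [hPdef, add_assoc]
    exact Polynomial.monic_X_pow_add (by exact_mod_cast hlow)
  have hPd : P.degree = 4 := by
    rw [hPdef, add_assoc, Polynomial.degree_add_eq_left_of_degree_lt, Polynomial.degree_X_pow]
    · rfl
    · rw [Polynomial.degree_X_pow]; exact_mod_cast hlow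
  have hrep : ∀ t : MvPolynomial (Fin 3) K,
      e (psi3 K t) = Polynomial.eval₂
        ((Polynomial.C : S →+* Polynomial S).comp (phi2 K : S →+* S)) P (e t) := by
    intro t
    have key : (e : MvPolynomial (Fin 3) K →+* Polynomial S).comp
          ((psi3 K : MvPolynomial (Fin 3) K →ₐ[K] MvPolynomial (Fin 3) K) :
            MvPolynomial (Fin 3) K →+* MvPolynomial (Fin 3) K)
        = (Polynomial.eval₂RingHom
            ((Polynomial.C : S →+* Polynomial S).comp (phi2 K : S →+* S)) P).comp
            (e : MvPolynomial (Fin 3) K →+* Polynomial S) := by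
      apply MvPolynomial.ringHom_ext
      · intro a
        simp only [RingHom.coe_comp, Function.comp_apply, RingHom.coe_coe,
          Polynomial.coe_eval₂RingHom]
        rw [show (psi3 K) (C a) = C a by simp [psi3, algebraMap_eq], heC, Polynomial.eval₂_C]
        simp only [RingHom.coe_comp, Function.comp_apply, RingHom.coe_coe]
        rw [show (phi2 K) (C a) = C a by simp [phi2, algebraMap_eq]]
      · intro i
        have hv0 : (psi3 K) (X 0) = n1p K := by simp [psi3]
        have hv1 : (psi3 K) (X 1) = n2p K := by simp [psi3]
        have hv2 : (psi3 K) (X 2) = X 2 := by simp [psi3]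
        simp only [RingHom.coe_comp, Function.comp_apply, RingHom.coe_coe,
          Polynomial.coe_eval₂RingHom]
        fin_cases i
        · rw [show (⟨0, by norm_num⟩ : Fin 3) = 0 from rfl, hv0, hP, hx0, Polynomial.eval₂_X]
        · rw [show (⟨1, by norm_num⟩ : Fin 3) = 1 from rfl, hv1, hn2, hx1, Polynomial.eval₂_C]
          simp only [RingHom.coe_comp, Function.comp_apply, RingHom.coe_coe]
          rw [show (phi2 K) (X 0) = X 0 ^ 2 + X 0 * X 1 by simp [phi2]]
        · rw [show (⟨2, by norm_num⟩ : Fin 3) = 2 from rfl, hv2, hx2, Polynomial.eval₂_C]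
          simp only [RingHom.coe_comp, Function.comp_apply, RingHom.coe_coe]
          rw [show (phi2 K) (X 1) = X 1 by simp [phi2]]
    exact RingHom.congr_fun key t
  set ν : Fin 8 → S := ![1, 1, X 0, 1, X 0, 1, X 0, X 0] with hν
  set ic : Fin 8 → ℕ := ![0, 1, 0, 2, 1, 3, 2, 3] with hic
  have hμ : ∀ c : Fin 8,
      e (![1, X 0, X 1, X 0 ^ 2, X 0 * X 1, X 0 ^ 3, X 0 ^ 2 * X 1, X 0 ^ 3 * X 1] c)
        = Polynomial.C (ν c) * Polynomial.X ^ ic c := by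
    intro c
    fin_cases c
    · show e 1 = Polynomial.C 1 * Polynomial.X ^ 0
      simp
    · show e (X 0) = Polynomial.C 1 * Polynomial.X ^ 1
      simp [hx0]
    · show e (X 1) = Polynomial.C (X 0) * Polynomial.X ^ 0
      simp [hx1]
    · show e (X 0 ^ 2) = Polynomial.C 1 * Polynomial.X ^ 2
      simp [map_pow, hx0]
    · show e (X 0 * X 1) = Polynomial.C (X 0) * Polynomial.X ^ 1
      rw [map_mul, hx0, hx1]; ring
    · show e (X 0 ^ 3) = Polynomial.C 1 * Polynomial.X ^ 3
      simp [map_pow, hx0]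
    · show e (X 0 ^ 2 * X 1) = Polynomial.C (X 0) * Polynomial.X ^ 2
      rw [map_mul, map_pow, hx0, hx1]; ring
    · show e (X 0 ^ 3 * X 1) = Polynomial.C (X 0) * Polynomial.X ^ 3
      rw [map_mul, map_pow, hx0, hx1]; ring
  set M := (Finset.univ.sup fun c : Fin 8 => (e (b c)).natDegree) + 1 with hM
  have hcM : ∀ c : Fin 8, (e (b c)).natDegree < M := by
    intro c
    exact Nat.lt_succ_of_le
      (Finset.le_sup (f := fun c : Fin 8 => (e (b c)).natDegree) (Finset.mem_univ c))
  have h1 : ∑ c : Fin 8, (∑ m ∈ Finset.range M,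
      Polynomial.C (phi2 K ((e (b c)).coeff m) * ν c) * P ^ m) * Polynomial.X ^ ic c = 0 := by
    have h2 := congrArg e h
    rw [map_sum, map_zero] at h2
    rw [← h2]
    apply Finset.sum_congr rfl
    intro c _
    rw [map_mul, hrep, hμ, Polynomial.eval₂_eq_sum_range' _ (hcM c)]
    rw [Finset.sum_mul, Finset.sum_mul]
    apply Finset.sum_congr rfl
    intro m _
    simp only [map_mul, RingHom.coe_comp, Function.comp_apply, RingHom.coe_coe]
    ring
  have h3 : ∑ m ∈ Finset.range M, (∑ c : Fin 8,
      Polynomial.C (phi2 K ((e (b c)).coeff m) * ν c) * Polynomial.X ^ ic c) * P ^ m = 0 := by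
    rw [← regroup8 M P _ _]
    exact h1
  have hicle : ∀ c : Fin 8, ic c ≤ 3 := by decide
  have hz : ∀ m < M, (∑ c : Fin 8,
      Polynomial.C (phi2 K ((e (b c)).coeff m) * ν c) * Polynomial.X ^ ic c) = 0 := by
    apply baseP_aux hPm M _ _ h3
    intro m
    rw [hPd]
    refine lt_of_le_of_lt (Polynomial.degree_sum_le _ _) ?_
    refine lt_of_le_of_lt (Finset.sup_le fun c _ => ?_) (show (3 : WithBot ℕ) < 4 by norm_num)
    refine le_trans (Polynomial.degree_C_mul_X_pow_le _ _) ?_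
    exact_mod_cast WithBot.coe_le_coe.mpr (by exact_mod_cast hicle c)
  have hν0 : ν 0 = 1 := rfl
  have hν1 : ν 1 = 1 := rfl
  have hν2 : ν 2 = X 0 := rfl
  have hν3 : ν 3 = 1 := rfl
  have hν4 : ν 4 = X 0 := rfl
  have hν5 : ν 5 = 1 := rfl
  have hν6 : ν 6 = X 0 := rfl
  have hν7 : ν 7 = X 0 := rfl
  have hic0 : ic 0 = 0 := rfl
  have hic1 : ic 1 = 1 := rfl
  have hic2 : ic 2 = 0 := rfl
  have hic3 : ic 3 = 2 := rfl
  have hic4 : ic 4 = 1 := rfl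
  have hic5 : ic 5 = 3 := rfl
  have hic6 : ic 6 = 2 := rfl
  have hic7 : ic 7 = 3 := rfl
  have hco : ∀ c : Fin 8, ∀ m, (e (b c)).coeff m = 0 := by
    intro c m
    by_cases hm : m < M
    · have hq := hz m hm
      rw [Fin.sum_univ_eight] at hq
      rw [hν0, hν1, hν2, hν3, hν4, hν5, hν6, hν7,
        hic0, hic1, hic2, hic3, hic4, hic5, hic6, hic7] at hq
      have c0 := congrArg (fun p => Polynomial.coeff p 0) hq
      have c1 := congrArg (fun p => Polynomial.coeff p 1) hq
      have c2 := congrArg (fun p => Polynomial.coeff p 2) hq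
      have c3 := congrArg (fun p => Polynomial.coeff p 3) hq
      simp only [Polynomial.coeff_add, Polynomial.coeff_C_mul, Polynomial.coeff_X_pow,
        Polynomial.coeff_zero] at c0 c1 c2 c3
      norm_num at c0 c1 c2 c3
      have e0 := keyInj2 ((e (b 0)).coeff m) ((e (b 2)).coeff m) (by linear_combination c0)
      have e1 := keyInj2 ((e (b 1)).coeff m) ((e (b 4)).coeff m) (by linear_combination c1)
      have e2 := keyInj2 ((e (b 3)).coeff m) ((e (b 6)).coeff m) (by linear_combination c2)
      have e3 := keyInj2 ((e (b 5)).coeff m) ((e (b 7)).coeff m) (by linear_combination c3)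
      fin_cases c
      · exact e0.1
      · exact e1.1
      · exact e0.2
      · exact e2.1
      · exact e1.2
      · exact e3.1
      · exact e2.2
      · exact e3.2
    · exact Polynomial.coeff_eq_zero_of_natDegree_lt (by have := hcM c; omega)
  intro c
  apply e.injective
  rw [map_zero]
  exact Polynomial.ext fun m => by rw [hco c m, Polynomial.coeff_zero]


set_option maxHeartbeats 2000000 in
theorem K3_K4_free_over_A_C4
    {K : Type*} [Field K] [CharP K 2]
    (N₁ N₂ : MvPolynomial (Fin 3) K)
    (hN₁ : N₁ = ∏ i ∈ Finset.range 4, (⇑(sigmaC4 K))^[i] (X 0))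
    (hN₂ : N₂ = X 1 * sigmaC4 K (X 1))
    (F₃ : Fin 6 → MvPolynomial (Fin 3) K)
    (hF₃ : F₃ = ![1, X 0, X 1, X 0 ^ 2, deltaC4 K (X 0 ^ 3), deltaC4 K (X 0 ^ 3 * X 1)])
    (F₄ : Fin 8 → MvPolynomial (Fin 3) K)
    (hF₄ : F₄ = ![1, X 0, X 1, X 0 ^ 2, X 0 * X 1, X 0 ^ 3, X 0 ^ 2 * X 1, X 0 ^ 3 * X 1]) :
    -- `F₃` lies in `ker(Δ³)`, generates it over `A`, and is `A`-independent
    (∀ i : Fin 6, (deltaC4 K)^[3] (F₃ i) = 0) ∧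
    (∀ f : MvPolynomial (Fin 3) K, (deltaC4 K)^[3] f = 0 →
        f ∈ Submodule.span (Algebra.adjoin K {N₁, N₂, X 2}) (Set.range F₃)) ∧
    LinearIndependent (Algebra.adjoin K {N₁, N₂, X 2}) F₃ ∧
    -- `ker(Δ⁴)` is all of `k[V]`, generated freely over `A` by `F₄`
    (∀ f : MvPolynomial (Fin 3) K, (deltaC4 K)^[4] f = 0) ∧
    (∀ f : MvPolynomial (Fin 3) K,
        f ∈ Submodule.span (Algebra.adjoin K {N₁, N₂, X 2}) (Set.range F₄)) ∧
    LinearIndependent (Algebra.adjoin K {N₁, N₂, X 2}) F₄ := by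
  have h2 : (2 : MvPolynomial (Fin 3) K) = 0 := by
    have h := CharP.cast_eq_zero (MvPolynomial (Fin 3) K) 2
    exact_mod_cast h
  subst hF₃ hF₄
  have hσ0 : sigmaC4 K (X 0) = X 0 + X 1 := by simp [sigmaC4]
  have hσ1 : sigmaC4 K (X 1) = X 1 + X 2 := by simp [sigmaC4]
  have hσ2 : sigmaC4 K (X 2) = X 2 := by simp [sigmaC4]
  have hN1e : N₁ = n1p K := by
    rw [hN₁, n1p]
    rw [show (4:ℕ) = 3 + 1 from rfl, Finset.prod_range_succ, Finset.prod_range_succ,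
      Finset.prod_range_succ, Finset.prod_range_one]
    simp only [Function.iterate_succ_apply', Function.iterate_zero_apply]
    simp only [map_add, hσ0, hσ1, hσ2]
    linear_combination (3*X 0^3*X 1 + 2*X 0^3*X 2 + 5*X 0^2*X 1^2 + 6*X 0^2*X 1*X 2
      + X 0^2*X 2^2 + 3*X 0*X 1^3 + 4*X 0*X 1^2*X 2 + X 0*X 1*X 2^2) * h2
  have hN2e : N₂ = n2p K := by rw [hN₂, hσ1, n2p]; ring
  rw [hN1e, hN2e]
  set A := Algebra.adjoin K ({n1p K, n2p K, X 2} : Set (MvPolynomial (Fin 3) K)) with hA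
  have hrange : ({n1p K, n2p K, X 2} : Set (MvPolynomial (Fin 3) K))
      = Set.range ![n1p K, n2p K, X 2] := by
    ext u
    simp only [Set.mem_insert_iff, Set.mem_singleton_iff, Set.mem_range]
    constructor
    · rintro (rfl | rfl | rfl)
      exacts [⟨0, rfl⟩, ⟨1, rfl⟩, ⟨2, rfl⟩]
    · rintro ⟨i, rfl⟩
      fin_cases i
      · exact Or.inl rfl
      · exact Or.inr (Or.inl rfl)
      · exact Or.inr (Or.inr rfl)
  have hAr : A = (psi3 K).range := by
    rw [hA, hrange, Algebra.adjoin_range_eq_range_aeval]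
    rfl
  have hmemA : ∀ t, psi3 K t ∈ A := fun t => by rw [hAr]; exact ⟨t, rfl⟩
  have hgetb : ∀ x : MvPolynomial (Fin 3) K, x ∈ A → ∃ t, psi3 K t = x := by
    intro x hx; rw [hAr] at hx; exact hx
  have hn1A : n1p K ∈ A := Algebra.subset_adjoin (by simp)
  have hn2A : n2p K ∈ A := Algebra.subset_adjoin (by simp)
  have hX2A : (X 2 : MvPolynomial (Fin 3) K) ∈ A := Algebra.subset_adjoin (by simp)
  have hsmul : ∀ (a : MvPolynomial (Fin 3) K) (ha : a ∈ A) (g : MvPolynomial (Fin 3) K),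
      (⟨a, ha⟩ : A) • g = a * g := by
    intro a ha g
    rw [Subalgebra.smul_def]
    exact smul_eq_mul a g
  have hψ0 : psi3 K (X 0) = n1p K := by simp [psi3]
  have hψ1 : psi3 K (X 1) = n2p K := by simp [psi3]
  have hψ2 : psi3 K ((X 2 : MvPolynomial (Fin 3) K)) = X 2 := by simp [psi3]
  -- Δ step computations
  have d1 : deltaC4 K (1 : MvPolynomial (Fin 3) K) = 0 := by
    rw [deltaC4, map_one]; ring
  have d0 : deltaC4 K (0 : MvPolynomial (Fin 3) K) = 0 := by
    rw [deltaC4, map_zero]; ring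
  have dX0 : deltaC4 K (X 0) = X 1 := by rw [deltaC4, hσ0]; ring
  have dX1 : deltaC4 K (X 1) = X 2 := by rw [deltaC4, hσ1]; ring
  have dX2 : deltaC4 K ((X 2 : MvPolynomial (Fin 3) K)) = 0 := by rw [deltaC4, hσ2]; ring
  have dx21 : deltaC4 K (X 0 ^ 2) = X 1 ^ 2 := by
    rw [deltaC4, map_pow, hσ0]; linear_combination (X 0 * X 1) * h2
  have dx22 : deltaC4 K (X 1 ^ 2) = X 2 ^ 2 := by
    rw [deltaC4, map_pow, hσ1]; linear_combination (X 1 * X 2) * h2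
  have dx23 : deltaC4 K ((X 2 : MvPolynomial (Fin 3) K) ^ 2) = 0 := by
    rw [deltaC4, map_pow, hσ2]; ring
  have dxy1 : deltaC4 K (X 0 * X 1) = X 0 * X 2 + X 1 ^ 2 + X 1 * X 2 := by
    rw [deltaC4, map_mul, hσ0, hσ1]; ring
  have dxy2 : deltaC4 K (X 0 * X 2 + X 1 ^ 2 + X 1 * X 2) = X 1 * X 2 := by
    rw [deltaC4]
    simp only [map_add, map_mul, map_pow, hσ0, hσ1, hσ2]
    linear_combination (X 1 * X 2 + X 2 ^ 2) * h2
  have dxy3 : deltaC4 K (X 1 * X 2) = X 2 ^ 2 := by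
    rw [deltaC4, map_mul, hσ1, hσ2]; ring
  have dx31 : deltaC4 K (X 0 ^ 3) = X 0 ^ 2 * X 1 + X 0 * X 1 ^ 2 + X 1 ^ 3 := by
    rw [deltaC4, map_pow, hσ0]
    linear_combination (X 0 ^ 2 * X 1 + X 0 * X 1 ^ 2) * h2
  have dx32 : deltaC4 K (X 0 ^ 2 * X 1 + X 0 * X 1 ^ 2 + X 1 ^ 3)
      = X 0 ^ 2 * X 2 + X 0 * X 2 ^ 2 + X 2 ^ 3 := by
    rw [deltaC4]
    simp only [map_add, map_mul, map_pow, hσ0, hσ1, hσ2]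
    linear_combination (X 0 * X 1 ^ 2 + 2 * X 0 * X 1 * X 2 + X 1 ^ 3 + 3 * X 1 ^ 2 * X 2
      + 2 * X 1 * X 2 ^ 2) * h2
  have dx33 : deltaC4 K (X 0 ^ 2 * X 2 + X 0 * X 2 ^ 2 + X 2 ^ 3)
      = X 1 ^ 2 * X 2 + X 1 * X 2 ^ 2 := by
    rw [deltaC4]
    simp only [map_add, map_mul, map_pow, hσ0, hσ1, hσ2]
    linear_combination (X 0 * X 1 * X 2) * h2
  have dx2y1 : deltaC4 K (X 0 ^ 2 * X 1) = X 0 ^ 2 * X 2 + X 1 ^ 3 + X 1 ^ 2 * X 2 := by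
    rw [deltaC4, map_mul, map_pow, hσ0, hσ1]
    linear_combination (X 0 * X 1 ^ 2 + X 0 * X 1 * X 2) * h2
  have dx2y2 : deltaC4 K (X 0 ^ 2 * X 2 + X 1 ^ 3 + X 1 ^ 2 * X 2) = X 1 * X 2 ^ 2 := by
    rw [deltaC4]
    simp only [map_add, map_mul, map_pow, hσ0, hσ1, hσ2]
    linear_combination (X 0 * X 1 * X 2 + 2 * X 1 ^ 2 * X 2 + 2 * X 1 * X 2 ^ 2 + X 2 ^ 3) * h2
  have dx2y3 : deltaC4 K (X 1 * X 2 ^ 2) = X 2 ^ 3 := by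
    rw [deltaC4, map_mul, map_pow, hσ1, hσ2]; ring
  have dx3y1 : deltaC4 K (X 0 ^ 3 * X 1)
      = X 0 ^ 3 * X 2 + X 0 ^ 2 * X 1 ^ 2 + X 0 ^ 2 * X 1 * X 2 + X 0 * X 1 ^ 3
        + X 0 * X 1 ^ 2 * X 2 + X 1 ^ 4 + X 1 ^ 3 * X 2 := by
    rw [deltaC4, map_mul, map_pow, hσ0, hσ1]
    linear_combination (X 0 ^ 2 * X 1 ^ 2 + X 0 ^ 2 * X 1 * X 2 + X 0 * X 1 ^ 3
      + X 0 * X 1 ^ 2 * X 2) * h2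
  have dx3y2 : deltaC4 K (X 0 ^ 3 * X 2 + X 0 ^ 2 * X 1 ^ 2 + X 0 ^ 2 * X 1 * X 2 + X 0 * X 1 ^ 3
        + X 0 * X 1 ^ 2 * X 2 + X 1 ^ 4 + X 1 ^ 3 * X 2)
      = X 0 ^ 2 * X 1 * X 2 + X 0 * X 1 * X 2 ^ 2 + X 1 * X 2 ^ 3 := by
    rw [deltaC4]
    simp only [map_add, map_mul, map_pow, hσ0, hσ1, hσ2]
    linear_combination (2 * X 0 ^ 2 * X 1 * X 2 + X 0 ^ 2 * X 2 ^ 2 + X 0 * X 1 ^ 3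
      + 6 * X 0 * X 1 ^ 2 * X 2 + 4 * X 0 * X 1 * X 2 ^ 2 + X 0 * X 2 ^ 3 + X 1 ^ 4
      + 6 * X 1 ^ 3 * X 2 + 8 * X 1 ^ 2 * X 2 ^ 2 + 4 * X 1 * X 2 ^ 3 + X 2 ^ 4) * h2
  have dx3y3 : deltaC4 K (X 0 ^ 2 * X 1 * X 2 + X 0 * X 1 * X 2 ^ 2 + X 1 * X 2 ^ 3)
      = X 0 ^ 2 * X 2 ^ 2 + X 0 * X 2 ^ 3 + X 1 ^ 3 * X 2 + X 1 * X 2 ^ 3 + X 2 ^ 4 := by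
    rw [deltaC4]
    simp only [map_add, map_mul, map_pow, hσ0, hσ1, hσ2]
    linear_combination (X 0 * X 1 ^ 2 * X 2 + X 0 * X 1 * X 2 ^ 2 + X 1 ^ 2 * X 2 ^ 2) * h2
  -- σ has order 4, σ fixes the image of psi3
  have hσ4 : ∀ f, sigmaC4 K (sigmaC4 K (sigmaC4 K (sigmaC4 K f))) = f := by
    have key : (sigmaC4 K).comp ((sigmaC4 K).comp ((sigmaC4 K).comp (sigmaC4 K)))
        = AlgHom.id K (MvPolynomial (Fin 3) K) := by
      apply MvPolynomial.algHom_ext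
      intro i
      fin_cases i
      · show sigmaC4 K (sigmaC4 K (sigmaC4 K (sigmaC4 K (X 0)))) = X 0
        simp only [hσ0, hσ1, hσ2, map_add]
        linear_combination (2 * X 1 + 3 * X 2) * h2
      · show sigmaC4 K (sigmaC4 K (sigmaC4 K (sigmaC4 K (X 1)))) = X 1
        simp only [hσ0, hσ1, hσ2, map_add]
        linear_combination (2 * X 2) * h2
      · show sigmaC4 K (sigmaC4 K (sigmaC4 K (sigmaC4 K ((X 2 : MvPolynomial (Fin 3) K)))))
          = X 2
        simp only [hσ0, hσ1, hσ2, map_add]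
    intro f
    have := AlgHom.congr_fun key f
    simpa using this
  have hσψ : ∀ t, sigmaC4 K (psi3 K t) = psi3 K t := by
    have key : (sigmaC4 K).comp (psi3 K) = psi3 K := by
      apply MvPolynomial.algHom_ext
      intro i
      fin_cases i
      · show sigmaC4 K (psi3 K (X 0)) = psi3 K (X 0)
        rw [hψ0, n1p]
        simp only [map_add, map_mul, map_pow, hσ0, hσ1, hσ2]
        linear_combination (2*X 0^3*X 1 + 3*X 0^2*X 1^2 + X 0^2*X 1*X 2 + X 0^2*X 2^2
          + 3*X 0*X 1^3 + 3*X 0*X 1^2*X 2 + 4*X 0*X 1*X 2^2 + X 0*X 2^3 + X 1^4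
          + 2*X 1^3*X 2 + 3*X 1^2*X 2^2 + X 1*X 2^3) * h2
      · show sigmaC4 K (psi3 K (X 1)) = psi3 K (X 1)
        rw [hψ1, n2p]
        simp only [map_add, map_mul, map_pow, hσ0, hσ1, hσ2]
        linear_combination (X 1 * X 2 + X 2 ^ 2) * h2
      · show sigmaC4 K (psi3 K ((X 2 : MvPolynomial (Fin 3) K)))
          = psi3 K ((X 2 : MvPolynomial (Fin 3) K))
        rw [hψ2, hσ2]
    intro t
    have := AlgHom.congr_fun key t
    simpa using this
  have hΔadd : ∀ g h : MvPolynomial (Fin 3) K,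
      deltaC4 K (g + h) = deltaC4 K g + deltaC4 K h := by
    intro g h; rw [deltaC4, deltaC4, deltaC4, map_add]; ring
  have hΔψ : ∀ (t g : MvPolynomial (Fin 3) K),
      deltaC4 K (psi3 K t * g) = psi3 K t * deltaC4 K g := by
    intro t g; rw [deltaC4, deltaC4, map_mul, hσψ]; ring
  -- Δ⁴ = 0
  have hc4 : ∀ f : MvPolynomial (Fin 3) K, (deltaC4 K)^[4] f = 0 := by
    intro f
    have hit : (deltaC4 K)^[4] f
        = deltaC4 K (deltaC4 K (deltaC4 K (deltaC4 K f))) := by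
      simp [Function.iterate_succ_apply']
    rw [hit]
    simp only [deltaC4, map_sub]
    linear_combination hσ4 f + (-(2 * sigmaC4 K (sigmaC4 K (sigmaC4 K f)))
      + 3 * sigmaC4 K (sigmaC4 K f) - 2 * sigmaC4 K f + f) * h2
  have hit3 : ∀ g : MvPolynomial (Fin 3) K,
      (deltaC4 K)^[3] g = deltaC4 K (deltaC4 K (deltaC4 K g)) := by
    intro g; simp [Function.iterate_succ_apply']
  -- conjunct 1
  have hC1 : ∀ i : Fin 6,
      (deltaC4 K)^[3]
        ((![1, X 0, X 1, X 0 ^ 2, deltaC4 K (X 0 ^ 3), deltaC4 K (X 0 ^ 3 * X 1)] :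
          Fin 6 → MvPolynomial (Fin 3) K) i) = 0 := by
    intro i
    fin_cases i
    · show (deltaC4 K)^[3] (1 : MvPolynomial (Fin 3) K) = 0
      rw [hit3, d1, d0, d0]
    · show (deltaC4 K)^[3] (X 0) = 0
      rw [hit3, dX0, dX1, dX2]
    · show (deltaC4 K)^[3] (X 1) = 0
      rw [hit3, dX1, dX2, d0]
    · show (deltaC4 K)^[3] (X 0 ^ 2) = 0
      rw [hit3, dx21, dx22, dx23]
    · show (deltaC4 K)^[3] (deltaC4 K (X 0 ^ 3)) = 0
      rw [← Function.iterate_succ_apply]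
      exact hc4 _
    · show (deltaC4 K)^[3] (deltaC4 K (X 0 ^ 3 * X 1)) = 0
      rw [← Function.iterate_succ_apply]
      exact hc4 _
  -- span of F₄ is everything
  set vec8 : Fin 8 → MvPolynomial (Fin 3) K :=
    ![1, X 0, X 1, X 0 ^ 2, X 0 * X 1, X 0 ^ 3, X 0 ^ 2 * X 1, X 0 ^ 3 * X 1] with hvec8
  set sp4 := Submodule.span A (Set.range vec8) with hsp4
  have hvecmem : ∀ c : Fin 8, vec8 c ∈ sp4 := fun c => Submodule.subset_span ⟨c, rfl⟩
  have hmulmem : ∀ (a : MvPolynomial (Fin 3) K), a ∈ A → ∀ c : Fin 8,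
      a * vec8 c ∈ sp4 := by
    intro a ha c
    have := sp4.smul_mem ⟨a, ha⟩ (hvecmem c)
    rwa [hsmul] at this
  have hx4 : (X 0 : MvPolynomial (Fin 3) K) ^ 3 * X 0
      = n1p K * 1 + (n2p K + X 2 ^ 2) * X 0 ^ 2 + n2p K * X 2 * X 0 := by
    rw [n1p, n2p]
    linear_combination (-(X 0*X 1*X 2^2) - X 0*X 1^2*X 2 - X 0^2*X 1*X 2 - X 0^2*X 1^2
      - X 0^2*X 2^2) * h2
  have hx4y : (X 0 : MvPolynomial (Fin 3) K) ^ 3 * X 1 * X 0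
      = n1p K * X 1 + (n2p K + X 2 ^ 2) * (X 0 ^ 2 * X 1) + n2p K * X 2 * (X 0 * X 1) := by
    rw [n1p, n2p]
    linear_combination (-(X 0*X 1^2*X 2^2) - X 0*X 1^3*X 2 - X 0^2*X 1*X 2^2
      - X 0^2*X 1^2*X 2 - X 0^2*X 1^3) * h2
  have hy2 : (X 1 : MvPolynomial (Fin 3) K) * X 1 = n2p K * 1 + X 2 * X 1 := by
    rw [n2p]; linear_combination (-(X 1 * X 2)) * h2
  have hxy2 : (X 0 : MvPolynomial (Fin 3) K) * X 1 * X 1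
      = n2p K * X 0 + X 2 * (X 0 * X 1) := by
    rw [n2p]; linear_combination (-(X 0 * X 1 * X 2)) * h2
  have hx2y2 : (X 0 : MvPolynomial (Fin 3) K) ^ 2 * X 1 * X 1
      = n2p K * X 0 ^ 2 + X 2 * (X 0 ^ 2 * X 1) := by
    rw [n2p]; linear_combination (-(X 0 ^ 2 * X 1 * X 2)) * h2
  have hx3y2 : (X 0 : MvPolynomial (Fin 3) K) ^ 3 * X 1 * X 1
      = n2p K * X 0 ^ 3 + X 2 * (X 0 ^ 3 * X 1) := by
    rw [n2p]; linear_combination (-(X 0 ^ 3 * X 1 * X 2)) * h2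
  have hn2z2A : n2p K + X 2 ^ 2 ∈ A := add_mem hn2A (pow_mem hX2A 2)
  have hn2zA : n2p K * X 2 ∈ A := mul_mem hn2A hX2A
  have hclosed : ∀ (i : Fin 3) (g : MvPolynomial (Fin 3) K), g ∈ sp4 → g * X i ∈ sp4 := by
    intro i g hg
    induction hg using Submodule.span_induction with
    | mem x hx =>
      obtain ⟨c, rfl⟩ := hx
      fin_cases i
      · fin_cases c
        · show (1 : MvPolynomial (Fin 3) K) * X 0 ∈ sp4
          rw [one_mul]; exact hvecmem 1
        · show (X 0 : MvPolynomial (Fin 3) K) * X 0 ∈ sp4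
          rw [show (X 0 : MvPolynomial (Fin 3) K) * X 0 = X 0 ^ 2 by ring]
          exact hvecmem 3
        · show (X 1 : MvPolynomial (Fin 3) K) * X 0 ∈ sp4
          rw [show (X 1 : MvPolynomial (Fin 3) K) * X 0 = X 0 * X 1 by ring]
          exact hvecmem 4
        · show (X 0 : MvPolynomial (Fin 3) K) ^ 2 * X 0 ∈ sp4
          rw [show (X 0 : MvPolynomial (Fin 3) K) ^ 2 * X 0 = X 0 ^ 3 by ring]
          exact hvecmem 5
        · show (X 0 : MvPolynomial (Fin 3) K) * X 1 * X 0 ∈ sp4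
          rw [show (X 0 : MvPolynomial (Fin 3) K) * X 1 * X 0 = X 0 ^ 2 * X 1 by ring]
          exact hvecmem 6
        · show (X 0 : MvPolynomial (Fin 3) K) ^ 3 * X 0 ∈ sp4
          rw [hx4]
          exact add_mem (add_mem (hmulmem _ hn1A 0) (hmulmem _ hn2z2A 3)) (hmulmem _ hn2zA 1)
        · show (X 0 : MvPolynomial (Fin 3) K) ^ 2 * X 1 * X 0 ∈ sp4
          rw [show (X 0 : MvPolynomial (Fin 3) K) ^ 2 * X 1 * X 0 = X 0 ^ 3 * X 1 by ring]
          exact hvecmem 7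
        · show (X 0 : MvPolynomial (Fin 3) K) ^ 3 * X 1 * X 0 ∈ sp4
          rw [hx4y]
          exact add_mem (add_mem (hmulmem _ hn1A 2) (hmulmem _ hn2z2A 6)) (hmulmem _ hn2zA 4)
      · fin_cases c
        · show (1 : MvPolynomial (Fin 3) K) * X 1 ∈ sp4
          rw [one_mul]; exact hvecmem 2
        · show (X 0 : MvPolynomial (Fin 3) K) * X 1 ∈ sp4
          exact hvecmem 4
        · show (X 1 : MvPolynomial (Fin 3) K) * X 1 ∈ sp4
          rw [hy2]
          exact add_mem (hmulmem _ hn2A 0) (hmulmem _ hX2A 2)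
        · show (X 0 : MvPolynomial (Fin 3) K) ^ 2 * X 1 ∈ sp4
          exact hvecmem 6
        · show (X 0 : MvPolynomial (Fin 3) K) * X 1 * X 1 ∈ sp4
          rw [hxy2]
          exact add_mem (hmulmem _ hn2A 1) (hmulmem _ hX2A 4)
        · show (X 0 : MvPolynomial (Fin 3) K) ^ 3 * X 1 ∈ sp4
          exact hvecmem 7
        · show (X 0 : MvPolynomial (Fin 3) K) ^ 2 * X 1 * X 1 ∈ sp4
          rw [hx2y2]
          exact add_mem (hmulmem _ hn2A 3) (hmulmem _ hX2A 6)
        · show (X 0 : MvPolynomial (Fin 3) K) ^ 3 * X 1 * X 1 ∈ sp4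
          rw [hx3y2]
          exact add_mem (hmulmem _ hn2A 5) (hmulmem _ hX2A 7)
      · rw [mul_comm]
        exact hmulmem _ hX2A c
    | zero => rw [zero_mul]; exact sp4.zero_mem
    | add a b _ _ ha hb => rw [add_mul]; exact add_mem ha hb
    | smul r a _ ha => rw [smul_mul_assoc]; exact sp4.smul_mem r ha
  have hspan4 : ∀ f : MvPolynomial (Fin 3) K, f ∈ sp4 := by
    intro f
    induction f using MvPolynomial.induction_on with
    | C a =>
      have hCA : (C a : MvPolynomial (Fin 3) K) ∈ A := by
        have : algebraMap K (MvPolynomial (Fin 3) K) a ∈ A := A.algebraMap_mem a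
        rwa [algebraMap_eq] at this
      have := hmulmem (C a) hCA 0
      simpa [hvec8] using this
    | add p q hp hq => exact add_mem hp hq
    | mul_X p i hp => exact hclosed i p hp
  -- monomial Δ lemmas
  have dm0 : deltaC4 K (1 : MvPolynomial (Fin 3) K) = 0 := by
    rw [deltaC4]
    simp only [map_mul, map_pow, map_one, hσ0, hσ1, hσ2]
    ring
  have dm1 : deltaC4 K (X 0 : MvPolynomial (Fin 3) K) = X 1 := by
    rw [deltaC4]
    simp only [map_mul, map_pow, map_one, hσ0, hσ1, hσ2]
    ring
  have dm2 : deltaC4 K (X 1 : MvPolynomial (Fin 3) K) = X 2 := by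
    rw [deltaC4]
    simp only [map_mul, map_pow, map_one, hσ0, hσ1, hσ2]
    ring
  have dm3 : deltaC4 K (X 0 ^ 2 : MvPolynomial (Fin 3) K) = X 1 ^ 2 := by
    rw [deltaC4]
    simp only [map_mul, map_pow, map_one, hσ0, hσ1, hσ2]
    linear_combination (X 0 * X 1) * h2
  have dm4 : deltaC4 K (X 0 * X 1 : MvPolynomial (Fin 3) K) = X 0 * X 2 + X 1 * X 2 + X 1 ^ 2 := by
    rw [deltaC4]
    simp only [map_mul, map_pow, map_one, hσ0, hσ1, hσ2]
    ring
  have dm5 : deltaC4 K (X 0 ^ 3 : MvPolynomial (Fin 3) K) = X 0 * X 1 ^ 2 + X 0 ^ 2 * X 1 + X 1 ^ 3 := by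
    rw [deltaC4]
    simp only [map_mul, map_pow, map_one, hσ0, hσ1, hσ2]
    linear_combination (X 0 * X 1 ^ 2 + X 0 ^ 2 * X 1) * h2
  have dm6 : deltaC4 K (X 0 ^ 2 * X 1 : MvPolynomial (Fin 3) K) = X 0 ^ 2 * X 2 + X 1 ^ 2 * X 2 + X 1 ^ 3 := by
    rw [deltaC4]
    simp only [map_mul, map_pow, map_one, hσ0, hσ1, hσ2]
    linear_combination (X 0 * X 1 * X 2 + X 0 * X 1 ^ 2) * h2
  have dm7 : deltaC4 K (X 0 ^ 3 * X 1 : MvPolynomial (Fin 3) K) = X 0 * X 1 ^ 2 * X 2 + X 0 * X 1 ^ 3 + X 0 ^ 2 * X 1 * X 2 + X 0 ^ 2 * X 1 ^ 2 + X 0 ^ 3 * X 2 + X 1 ^ 3 * X 2 + X 1 ^ 4 := by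
    rw [deltaC4]
    simp only [map_mul, map_pow, map_one, hσ0, hσ1, hσ2]
    linear_combination (X 0 * X 1 ^ 2 * X 2 + X 0 * X 1 ^ 3 + X 0 ^ 2 * X 1 * X 2 + X 0 ^ 2 * X 1 ^ 2) * h2
  have dm8 : deltaC4 K (X 2 : MvPolynomial (Fin 3) K) = 0 := by
    rw [deltaC4]
    simp only [map_mul, map_pow, map_one, hσ0, hσ1, hσ2]
    ring
  have dm9 : deltaC4 K (X 1 ^ 2 : MvPolynomial (Fin 3) K) = X 2 ^ 2 := by
    rw [deltaC4]
    simp only [map_mul, map_pow, map_one, hσ0, hσ1, hσ2]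
    linear_combination (X 1 * X 2) * h2
  have dm10 : deltaC4 K (X 0 * X 2 : MvPolynomial (Fin 3) K) = X 1 * X 2 := by
    rw [deltaC4]
    simp only [map_mul, map_pow, map_one, hσ0, hσ1, hσ2]
    ring
  have dm11 : deltaC4 K (X 1 * X 2 : MvPolynomial (Fin 3) K) = X 2 ^ 2 := by
    rw [deltaC4]
    simp only [map_mul, map_pow, map_one, hσ0, hσ1, hσ2]
    ring
  have dm12 : deltaC4 K (X 0 * X 1 ^ 2 : MvPolynomial (Fin 3) K) = X 0 * X 2 ^ 2 + X 1 * X 2 ^ 2 + X 1 ^ 3 := by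
    rw [deltaC4]
    simp only [map_mul, map_pow, map_one, hσ0, hσ1, hσ2]
    linear_combination (X 0 * X 1 * X 2 + X 1 ^ 2 * X 2) * h2
  have dm13 : deltaC4 K (X 1 ^ 3 : MvPolynomial (Fin 3) K) = X 1 * X 2 ^ 2 + X 1 ^ 2 * X 2 + X 2 ^ 3 := by
    rw [deltaC4]
    simp only [map_mul, map_pow, map_one, hσ0, hσ1, hσ2]
    linear_combination (X 1 * X 2 ^ 2 + X 1 ^ 2 * X 2) * h2
  have dm14 : deltaC4 K (X 0 ^ 2 * X 2 : MvPolynomial (Fin 3) K) = X 1 ^ 2 * X 2 := by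
    rw [deltaC4]
    simp only [map_mul, map_pow, map_one, hσ0, hσ1, hσ2]
    linear_combination (X 0 * X 1 * X 2) * h2
  have dm15 : deltaC4 K (X 1 ^ 2 * X 2 : MvPolynomial (Fin 3) K) = X 2 ^ 3 := by
    rw [deltaC4]
    simp only [map_mul, map_pow, map_one, hσ0, hσ1, hσ2]
    linear_combination (X 1 * X 2 ^ 2) * h2
  have dm16 : deltaC4 K (X 0 ^ 3 * X 2 : MvPolynomial (Fin 3) K) = X 0 * X 1 ^ 2 * X 2 + X 0 ^ 2 * X 1 * X 2 + X 1 ^ 3 * X 2 := by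
    rw [deltaC4]
    simp only [map_mul, map_pow, map_one, hσ0, hσ1, hσ2]
    linear_combination (X 0 * X 1 ^ 2 * X 2 + X 0 ^ 2 * X 1 * X 2) * h2
  have dm17 : deltaC4 K (X 0 ^ 2 * X 1 ^ 2 : MvPolynomial (Fin 3) K) = X 0 ^ 2 * X 2 ^ 2 + X 1 ^ 2 * X 2 ^ 2 + X 1 ^ 4 := by
    rw [deltaC4]
    simp only [map_mul, map_pow, map_one, hσ0, hσ1, hσ2]
    linear_combination (X 0 * X 1 * X 2 ^ 2 + (2 : MvPolynomial (Fin 3) K) * (X 0 * X 1 ^ 2 * X 2) + X 0 * X 1 ^ 3 + X 0 ^ 2 * X 1 * X 2 + X 1 ^ 3 * X 2) * h2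
  have dm18 : deltaC4 K (X 0 ^ 2 * X 1 * X 2 : MvPolynomial (Fin 3) K) = X 0 ^ 2 * X 2 ^ 2 + X 1 ^ 2 * X 2 ^ 2 + X 1 ^ 3 * X 2 := by
    rw [deltaC4]
    simp only [map_mul, map_pow, map_one, hσ0, hσ1, hσ2]
    linear_combination (X 0 * X 1 * X 2 ^ 2 + X 0 * X 1 ^ 2 * X 2) * h2
  have dm19 : deltaC4 K (X 0 * X 1 ^ 3 : MvPolynomial (Fin 3) K) = X 0 * X 1 * X 2 ^ 2 + X 0 * X 1 ^ 2 * X 2 + X 0 * X 2 ^ 3 + X 1 * X 2 ^ 3 + X 1 ^ 2 * X 2 ^ 2 + X 1 ^ 3 * X 2 + X 1 ^ 4 := by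
    rw [deltaC4]
    simp only [map_mul, map_pow, map_one, hσ0, hσ1, hσ2]
    linear_combination (X 0 * X 1 * X 2 ^ 2 + X 0 * X 1 ^ 2 * X 2 + X 1 ^ 2 * X 2 ^ 2 + X 1 ^ 3 * X 2) * h2
  have dm20 : deltaC4 K (X 0 * X 1 ^ 2 * X 2 : MvPolynomial (Fin 3) K) = X 0 * X 2 ^ 3 + X 1 * X 2 ^ 3 + X 1 ^ 3 * X 2 := by
    rw [deltaC4]
    simp only [map_mul, map_pow, map_one, hσ0, hσ1, hσ2]
    linear_combination (X 0 * X 1 * X 2 ^ 2 + X 1 ^ 2 * X 2 ^ 2) * h2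
  have dm21 : deltaC4 K (X 1 ^ 4 : MvPolynomial (Fin 3) K) = X 2 ^ 4 := by
    rw [deltaC4]
    simp only [map_mul, map_pow, map_one, hσ0, hσ1, hσ2]
    linear_combination ((2 : MvPolynomial (Fin 3) K) * (X 1 * X 2 ^ 3) + (3 : MvPolynomial (Fin 3) K) * (X 1 ^ 2 * X 2 ^ 2) + (2 : MvPolynomial (Fin 3) K) * (X 1 ^ 3 * X 2)) * h2
  have dm22 : deltaC4 K (X 1 ^ 3 * X 2 : MvPolynomial (Fin 3) K) = X 1 * X 2 ^ 3 + X 1 ^ 2 * X 2 ^ 2 + X 2 ^ 4 := by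
    rw [deltaC4]
    simp only [map_mul, map_pow, map_one, hσ0, hσ1, hσ2]
    linear_combination (X 1 * X 2 ^ 3 + X 1 ^ 2 * X 2 ^ 2) * h2
  have dm23 : deltaC4 K (X 2 ^ 2 : MvPolynomial (Fin 3) K) = 0 := by
    rw [deltaC4]
    simp only [map_mul, map_pow, map_one, hσ0, hσ1, hσ2]
    ring
  have dm24 : deltaC4 K (X 0 * X 2 ^ 2 : MvPolynomial (Fin 3) K) = X 1 * X 2 ^ 2 := by
    rw [deltaC4]
    simp only [map_mul, map_pow, map_one, hσ0, hσ1, hσ2]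
    ring
  have dm25 : deltaC4 K (X 1 * X 2 ^ 2 : MvPolynomial (Fin 3) K) = X 2 ^ 3 := by
    rw [deltaC4]
    simp only [map_mul, map_pow, map_one, hσ0, hσ1, hσ2]
    ring
  have dm26 : deltaC4 K (X 2 ^ 3 : MvPolynomial (Fin 3) K) = 0 := by
    rw [deltaC4]
    simp only [map_mul, map_pow, map_one, hσ0, hσ1, hσ2]
    ring
  have dm27 : deltaC4 K (X 0 ^ 2 * X 2 ^ 2 : MvPolynomial (Fin 3) K) = X 1 ^ 2 * X 2 ^ 2 := by
    rw [deltaC4]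
    simp only [map_mul, map_pow, map_one, hσ0, hσ1, hσ2]
    linear_combination (X 0 * X 1 * X 2 ^ 2) * h2
  have dm28 : deltaC4 K (X 1 ^ 2 * X 2 ^ 2 : MvPolynomial (Fin 3) K) = X 2 ^ 4 := by
    rw [deltaC4]
    simp only [map_mul, map_pow, map_one, hσ0, hσ1, hσ2]
    linear_combination (X 1 * X 2 ^ 3) * h2
  have dm29 : deltaC4 K (X 0 * X 1 * X 2 ^ 2 : MvPolynomial (Fin 3) K) = X 0 * X 2 ^ 3 + X 1 * X 2 ^ 3 + X 1 ^ 2 * X 2 ^ 2 := by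
    rw [deltaC4]
    simp only [map_mul, map_pow, map_one, hσ0, hσ1, hσ2]
    ring
  have dm30 : deltaC4 K (X 0 * X 2 ^ 3 : MvPolynomial (Fin 3) K) = X 1 * X 2 ^ 3 := by
    rw [deltaC4]
    simp only [map_mul, map_pow, map_one, hσ0, hσ1, hσ2]
    ring
  have dm31 : deltaC4 K (X 1 * X 2 ^ 3 : MvPolynomial (Fin 3) K) = X 2 ^ 4 := by
    rw [deltaC4]
    simp only [map_mul, map_pow, map_one, hσ0, hσ1, hσ2]
    ring
  have dm32 : deltaC4 K (X 2 ^ 4 : MvPolynomial (Fin 3) K) = 0 := by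
    rw [deltaC4]
    simp only [map_mul, map_pow, map_one, hσ0, hσ1, hσ2]
    ring
  have hΔψ0 : ∀ t : MvPolynomial (Fin 3) K, deltaC4 K (psi3 K t) = 0 := by
    intro t; rw [deltaC4, hσψ]; ring
  -- vector entry lemmas
  have hv80 : vec8 0 = 1 := rfl
  have hv81 : vec8 1 = X 0 := rfl
  have hv82 : vec8 2 = X 1 := rfl
  have hv83 : vec8 3 = X 0 ^ 2 := rfl
  have hv84 : vec8 4 = X 0 * X 1 := rfl
  have hv85 : vec8 5 = X 0 ^ 3 := rfl
  have hv86 : vec8 6 = X 0 ^ 2 * X 1 := rfl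
  have hv87 : vec8 7 = X 0 ^ 3 * X 1 := rfl
  -- linear independence of F₄
  have hLI4 : LinearIndependent A vec8 := by
    rw [Fintype.linearIndependent_iff]
    intro g hg i
    choose b hb using fun i => hgetb _ (g i).2
    have hsm : ∀ (c : Fin 8) (v : MvPolynomial (Fin 3) K), g c • v = psi3 K (b c) * v := by
      intro c v
      rw [show g c = (⟨psi3 K (b c), hmemA _⟩ : A) from Subtype.ext (hb c).symm, hsmul]
    simp only [hsm] at hg
    rw [hvec8] at hg
    have hz := keyInj b hg
    have : (g i : MvPolynomial (Fin 3) K) = 0 := by rw [← hb i, hz i, map_zero]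
    exact Subtype.ext (by simpa using this)
  -- F₃ vector entry lemmas
  have hvF0 : (![1, X 0, X 1, X 0 ^ 2, deltaC4 K (X 0 ^ 3), deltaC4 K (X 0 ^ 3 * X 1)] :
      Fin 6 → MvPolynomial (Fin 3) K) 0 = 1 := rfl
  have hvF1 : (![1, X 0, X 1, X 0 ^ 2, deltaC4 K (X 0 ^ 3), deltaC4 K (X 0 ^ 3 * X 1)] :
      Fin 6 → MvPolynomial (Fin 3) K) 1 = X 0 := rfl
  have hvF2 : (![1, X 0, X 1, X 0 ^ 2, deltaC4 K (X 0 ^ 3), deltaC4 K (X 0 ^ 3 * X 1)] :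
      Fin 6 → MvPolynomial (Fin 3) K) 2 = X 1 := rfl
  have hvF3 : (![1, X 0, X 1, X 0 ^ 2, deltaC4 K (X 0 ^ 3), deltaC4 K (X 0 ^ 3 * X 1)] :
      Fin 6 → MvPolynomial (Fin 3) K) 3 = X 0 ^ 2 := rfl
  have hvF4 : (![1, X 0, X 1, X 0 ^ 2, deltaC4 K (X 0 ^ 3), deltaC4 K (X 0 ^ 3 * X 1)] :
      Fin 6 → MvPolynomial (Fin 3) K) 4 = deltaC4 K (X 0 ^ 3) := rfl
  have hvF5 : (![1, X 0, X 1, X 0 ^ 2, deltaC4 K (X 0 ^ 3), deltaC4 K (X 0 ^ 3 * X 1)] :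
      Fin 6 → MvPolynomial (Fin 3) K) 5 = deltaC4 K (X 0 ^ 3 * X 1) := rfl
  have hdu : deltaC4 K (X 0 ^ 3) = X 0 ^ 2 * X 1 + X 0 * X 1 ^ 2 + X 1 ^ 3 := dx31
  have hdv : deltaC4 K (X 0 ^ 3 * X 1)
      = X 0 ^ 3 * X 2 + X 0 ^ 2 * X 1 ^ 2 + X 0 ^ 2 * X 1 * X 2 + X 0 * X 1 ^ 3
        + X 0 * X 1 ^ 2 * X 2 + X 1 ^ 4 + X 1 ^ 3 * X 2 := dx3y1
  -- conjunct 2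
  have hC2 : ∀ f : MvPolynomial (Fin 3) K, (deltaC4 K)^[3] f = 0 →
      f ∈ Submodule.span A (Set.range
        (![1, X 0, X 1, X 0 ^ 2, deltaC4 K (X 0 ^ 3), deltaC4 K (X 0 ^ 3 * X 1)] :
          Fin 6 → MvPolynomial (Fin 3) K)) := by
    intro f hf
    obtain ⟨cA, hcA⟩ := (Submodule.mem_span_range_iff_exists_fun A).mp (hspan4 f)
    choose b hb using fun i => hgetb _ (cA i).2
    have hsm : ∀ (c : Fin 8) (v : MvPolynomial (Fin 3) K), cA c • v = psi3 K (b c) * v := by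
      intro c v
      rw [show cA c = (⟨psi3 K (b c), hmemA _⟩ : A) from Subtype.ext (hb c).symm, hsmul]
    simp only [hsm] at hcA
    rw [Fin.sum_univ_eight, hv80, hv81, hv82, hv83, hv84, hv85, hv86, hv87] at hcA
    -- Δ³ f in coordinates
    have hD3' : deltaC4 K (deltaC4 K (deltaC4 K f))
        = psi3 K (b 4) * X 2 ^ 2
          + psi3 K (b 5) * (X 1 ^ 2 * X 2 + X 1 * X 2 ^ 2)
          + psi3 K (b 6) * X 2 ^ 3
          + psi3 K (b 7) * (X 0 ^ 2 * X 2 ^ 2 + X 0 * X 2 ^ 3 + X 1 ^ 3 * X 2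
              + X 1 * X 2 ^ 3 + X 2 ^ 4) := by
      rw [← hcA]
      simp only [hΔadd, hΔψ, dm0, dm1, dm2, dm3, dm4, dm5, dm6, dm7, dm8, dm9, dm10, dm11, dm12, dm13, dm14, dm15, dm16, dm17, dm18, dm19, dm20, dm21, dm22, dm23, dm24, dm25, dm26, dm27, dm28, dm29, dm30, dm31, dm32, hΔψ0, mul_zero, add_zero, zero_add, mul_one, zero_mul]
      linear_combination (psi3 K (b 5) * (X 1 ^ 2 * X 2 + X 1 * X 2 ^ 2 + 3 * X 2 ^ 3)
        + psi3 K (b 6) * X 2 ^ 3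
        + psi3 K (b 7) * (X 1 ^ 3 * X 2 + 4 * X 1 ^ 2 * X 2 ^ 2 + 4 * X 1 * X 2 ^ 3
            + X 0 * X 2 ^ 3 + 6 * X 2 ^ 4)) * h2
    have hexpr : psi3 K (b 4) * X 2 ^ 2
          + psi3 K (b 5) * (X 1 ^ 2 * X 2 + X 1 * X 2 ^ 2)
          + psi3 K (b 6) * X 2 ^ 3
          + psi3 K (b 7) * (X 0 ^ 2 * X 2 ^ 2 + X 0 * X 2 ^ 3 + X 1 ^ 3 * X 2
              + X 1 * X 2 ^ 3 + X 2 ^ 4) = 0 := by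
      rw [← hD3', ← hit3 f]
      exact hf
    set G : Fin 8 → MvPolynomial (Fin 3) K :=
      ![b 4 * X 2 ^ 2 + b 5 * (X 1 * X 2) + b 6 * X 2 ^ 3 + b 7 * (X 2 ^ 4 + X 1 * X 2 ^ 2),
        b 7 * X 2 ^ 3, b 7 * (X 1 * X 2), b 7 * X 2 ^ 2, 0, 0, 0, 0] with hGdef
    have hG0 : G 0 = b 4 * X 2 ^ 2 + b 5 * (X 1 * X 2) + b 6 * X 2 ^ 3
        + b 7 * (X 2 ^ 4 + X 1 * X 2 ^ 2) := rfl
    have hG1 : G 1 = b 7 * X 2 ^ 3 := rfl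
    have hG2 : G 2 = b 7 * (X 1 * X 2) := rfl
    have hG3 : G 3 = b 7 * X 2 ^ 2 := rfl
    have hG4 : G 4 = 0 := rfl
    have hG5 : G 5 = 0 := rfl
    have hG6 : G 6 = 0 := rfl
    have hG7 : G 7 = 0 := rfl
    have hkey : ∑ c : Fin 8, psi3 K (G c) * vec8 c = 0 := by
      rw [Fin.sum_univ_eight, hv80, hv81, hv82, hv83, hv84, hv85, hv86, hv87,
        hG0, hG1, hG2, hG3, hG4, hG5, hG6, hG7]
      simp only [map_add, map_mul, map_pow, map_zero, hψ1, hψ2, zero_mul, add_zero, mul_one]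
      simp only [n2p]
      linear_combination hexpr + (psi3 K (b 7) * (X 1 ^ 2 * X 2 ^ 2)) * h2
    rw [hvec8] at hkey
    have hGz := keyInj G hkey
    have hb7 : b 7 = 0 := by
      have h3 : b 7 * X 2 ^ 2 = 0 := hGz 3
      rcases mul_eq_zero.mp h3 with h | h
      · exact h
      · exact absurd h (pow_ne_zero _ (X_ne_zero _))
    have hg0 := hGz 0
    rw [hG0, hb7] at hg0
    have hE : b 4 * X 2 + b 5 * X 1 + b 6 * X 2 ^ 2 = 0 := by
      have hw : X 2 * (b 4 * X 2 + b 5 * X 1 + b 6 * X 2 ^ 2) = 0 := by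
        linear_combination hg0
      rcases mul_eq_zero.mp hw with h | h
      · exact absurd h (X_ne_zero _)
      · exact h
    -- divide b 5 by X 2
    set E3 := (renameEquiv K (Equiv.swap (0 : Fin 3) 2)).trans (MvPolynomial.finSuccEquiv K 2)
      with hE3def
    have hE3z : E3 ((X 2 : MvPolynomial (Fin 3) K)) = Polynomial.X := by
      rw [hE3def]
      simp only [AlgEquiv.trans_apply, renameEquiv_apply, rename_X, Equiv.swap_apply_right]
      exact finSuccEquiv_X_zero
    have hE3y : E3 ((X 1 : MvPolynomial (Fin 3) K)) = Polynomial.C (X 0) := by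
      rw [hE3def]
      simp only [AlgEquiv.trans_apply, renameEquiv_apply, rename_X]
      rw [Equiv.swap_apply_of_ne_of_ne (by decide) (by decide)]
      rw [show (1 : Fin 3) = Fin.succ 0 from rfl]
      exact finSuccEquiv_X_succ
    have hcz : (E3 (b 5)).coeff 0 = 0 := by
      have h5 := congrArg (fun p => Polynomial.coeff p 0) (congrArg E3 hE)
      simp only [map_add, map_mul, map_pow, map_zero, hE3z, hE3y, Polynomial.coeff_add,
        Polynomial.mul_coeff_zero, Polynomial.coeff_X_zero, Polynomial.coeff_C_zero,
        Polynomial.coeff_zero, mul_zero, add_zero, zero_add, Polynomial.coeff_X_pow] at h5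
      norm_num at h5
      exact h5
    obtain ⟨T, hT⟩ := Polynomial.X_dvd_iff.mpr hcz
    set t := E3.symm T with htdef
    have hb5 : b 5 = X 2 * t := by
      apply E3.injective
      rw [map_mul, hE3z, htdef, AlgEquiv.apply_symm_apply, hT]
    have hb4ψ : psi3 K (b 4) = n2p K * psi3 K t + X 2 * psi3 K (b 6) := by
      have hE' : X 2 * (b 4 + X 1 * t + X 2 * b 6) = 0 := by
        rw [hb5] at hE
        linear_combination hE
      have hEz : b 4 + X 1 * t + X 2 * b 6 = 0 := by
        rcases mul_eq_zero.mp hE' with h | h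
        · exact absurd h (X_ne_zero _)
        · exact h
      have happ := congrArg (psi3 K) hEz
      simp only [map_add, map_mul, map_zero, hψ1, hψ2] at happ
      linear_combination happ - (n2p K * psi3 K t + X 2 * psi3 K (b 6)) * h2
    have hb5ψ : psi3 K (b 5) = X 2 * psi3 K t := by rw [hb5, map_mul, hψ2]
    have hb7ψ : psi3 K (b 7) = 0 := by rw [hb7, map_zero]
    -- assemble membership
    apply (Submodule.mem_span_range_iff_exists_fun A).mpr
    set src : Fin 6 → MvPolynomial (Fin 3) K :=
      ![b 0 + b 6 * (X 1 * X 2) + t * X 1 ^ 2, b 1 + b 6 * X 1,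
        b 2 + b 6 * (X 1 + X 2 ^ 2) + t * (X 1 * X 2), b 3 + t * X 1, b 6, t] with hsrcdef
    have hs0 : src 0 = b 0 + b 6 * (X 1 * X 2) + t * X 1 ^ 2 := rfl
    have hs1 : src 1 = b 1 + b 6 * X 1 := rfl
    have hs2 : src 2 = b 2 + b 6 * (X 1 + X 2 ^ 2) + t * (X 1 * X 2) := rfl
    have hs3 : src 3 = b 3 + t * X 1 := rfl
    have hs4 : src 4 = b 6 := rfl
    have hs5 : src 5 = t := rfl
    refine ⟨fun i => ⟨psi3 K (src i), hmemA _⟩, ?_⟩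
    rw [Fin.sum_univ_six]
    simp only [hsmul, hvF0, hvF1, hvF2, hvF3, hvF4, hvF5, hs0, hs1, hs2, hs3, hs4, hs5]
    rw [hdu, hdv]
    simp only [map_add, map_mul, map_pow, hψ1, hψ2]
    simp only [n2p]
    have hb4ψ' := hb4ψ
    simp only [n2p] at hb4ψ'
    linear_combination hcA + (X 0 * X 1) * hb4ψ' + X 0 ^ 3 * hb5ψ + (X 0 ^ 3 * X 1) * hb7ψ
      + (psi3 K (b 6) * (X 0 * X 1 * X 2) - X 0 * X 1 * psi3 K (b 4)
        - X 0 ^ 3 * X 1 * psi3 K (b 7)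
        + psi3 K t * (X 0 * X 1 ^ 2 * X 2 + X 0 * X 1 ^ 3 + X 0 ^ 3 * X 2)
        - X 0 ^ 3 * psi3 K (b 5)) * h2
      + (psi3 K (b 6) * (X 0 * X 1 ^ 2 + X 1 * X 2 ^ 2 + X 1 ^ 2 * X 2 + X 1 ^ 3) + psi3 K t * (X 0 ^ 2 * X 1 * X 2 + X 0 ^ 2 * X 1 ^ 2 + X 1 ^ 2 * X 2 ^ 2 + 2 * X 1 ^ 3 * X 2 + X 1 ^ 4)) * h2
  -- conjunct 3 : linear independence of F₃
  have hLI3 : LinearIndependent A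
      (![1, X 0, X 1, X 0 ^ 2, deltaC4 K (X 0 ^ 3), deltaC4 K (X 0 ^ 3 * X 1)] :
        Fin 6 → MvPolynomial (Fin 3) K) := by
    rw [Fintype.linearIndependent_iff]
    intro g hg i
    choose b hb using fun i => hgetb _ (g i).2
    have hsm : ∀ (c : Fin 6) (v : MvPolynomial (Fin 3) K), g c • v = psi3 K (b c) * v := by
      intro c v
      rw [show g c = (⟨psi3 K (b c), hmemA _⟩ : A) from Subtype.ext (hb c).symm, hsmul]
    simp only [hsm] at hg
    rw [Fin.sum_univ_six, hvF0, hvF1, hvF2, hvF3, hvF4, hvF5, hdu, hdv] at hg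
    set G2 : Fin 8 → MvPolynomial (Fin 3) K :=
      ![b 0 + b 4 * (X 1 * X 2) + b 5 * X 1 ^ 2, b 1 + b 4 * X 1,
        b 2 + b 4 * (X 1 + X 2 ^ 2) + b 5 * (X 1 * X 2), b 3 + b 5 * X 1,
        b 4 * X 2 + b 5 * X 1, b 5 * X 2, b 4, 0] with hG2def
    have hG20 : G2 0 = b 0 + b 4 * (X 1 * X 2) + b 5 * X 1 ^ 2 := rfl
    have hG21 : G2 1 = b 1 + b 4 * X 1 := rfl
    have hG22 : G2 2 = b 2 + b 4 * (X 1 + X 2 ^ 2) + b 5 * (X 1 * X 2) := rfl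
    have hG23 : G2 3 = b 3 + b 5 * X 1 := rfl
    have hG24 : G2 4 = b 4 * X 2 + b 5 * X 1 := rfl
    have hG25 : G2 5 = b 5 * X 2 := rfl
    have hG26 : G2 6 = b 4 := rfl
    have hG27 : G2 7 = 0 := rfl
    have hkey : ∑ c : Fin 8, psi3 K (G2 c) * vec8 c = 0 := by
      rw [Fin.sum_univ_eight, hv80, hv81, hv82, hv83, hv84, hv85, hv86, hv87,
        hG20, hG21, hG22, hG23, hG24, hG25, hG26, hG27]
      simp only [map_add, map_mul, map_pow, map_zero, hψ1, hψ2, zero_mul, add_zero, mul_one]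
      simp only [n2p]
      linear_combination hg + (psi3 K (b 4) * (X 0 * X 1 * X 2 + X 1 * X 2 ^ 2 + X 1 ^ 2 * X 2)
        + psi3 K (b 5) * (X 1 ^ 2 * X 2 ^ 2 + X 1 ^ 3 * X 2)) * h2
    rw [hvec8] at hkey
    have hGz := keyInj G2 hkey
    have hb4 : b 4 = 0 := hGz 6
    have hb5 : b 5 = 0 := by
      have h5 : b 5 * X 2 = 0 := hGz 5
      rcases mul_eq_zero.mp h5 with h | h
      · exact h
      · exact absurd h (X_ne_zero _)
    have hbz : ∀ c : Fin 6, b c = 0 := by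
      intro c
      fin_cases c
      · show b 0 = 0
        have h0 := hGz 0
        rw [hG20, hb4, hb5] at h0
        simpa using h0
      · show b 1 = 0
        have h1 := hGz 1
        rw [hG21, hb4] at h1
        simpa using h1
      · show b 2 = 0
        have h1 := hGz 2
        rw [hG22, hb4, hb5] at h1
        simpa using h1
      · show b 3 = 0
        have h1 := hGz 3
        rw [hG23, hb5] at h1
        simpa using h1
      · exact hb4
      · exact hb5
    have : (g i : MvPolynomial (Fin 3) K) = 0 := by rw [← hb i, hbz i, map_zero]
    exact Subtype.ext (by simpa using this)
  exact ⟨hC1, hC2, hLI3, hc4, hspan4, hLI4⟩
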